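/- Let α ∈ (0,1) and let X be a real random variable with E[max(0,−X)] < ∞. Then ES_α(X) = (1−α)^{−1} ∫_α^1 VaR_u(X) du, where the integral is the Lebesgue integral over u ∈ (α,1). -/

import Mathlib

open MeasureTheory Set Filter Topology

/-- The `α`-quantile of a real random variable `X`:
`q_α(X) = inf {x ∈ ℝ : P[X ≤ x] ≥ α}`. -/
noncomputable def quantile {Ω : Type*} [MeasurableSpace Ω] (μ : Measure Ω)
    (X : Ω → ℝ) (α : ℝ) : ℝ :=
  sInf {x : ℝ | ENNReal.ofReal α ≤ μ {ω | X ω ≤ x}}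

/-- Value-at-risk at level `α`: `VaR_α(X) = q_α(-X)`. -/
noncomputable def VaR {Ω : Type*} [MeasurableSpace Ω] (μ : Measure Ω)
    (X : Ω → ℝ) (α : ℝ) : ℝ :=
  quantile μ (fun ω => - X ω) α

/-- Expected Shortfall at level `α`:
`ES_α(X) = -(1-α)⁻¹ (E[X·1{-X ≥ q_α(-X)}] + q_α(-X)·(α - P[-X < q_α(-X)]))`. -/
noncomputable def ES {Ω : Type*} [MeasurableSpace Ω] (μ : Measure Ω)
    (X : Ω → ℝ) (α : ℝ) : ℝ :=
  - (1 - α)⁻¹ * ((∫ ω in {ω | quantile μ (fun ω' => - X ω') α ≤ - X ω}, X ω ∂μ)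
    + quantile μ (fun ω' => - X ω') α
      * (α - (μ {ω | - X ω < quantile μ (fun ω' => - X ω') α}).toReal))

/-- Galois connection for the generalized inverse of a cdf-like Stieltjes function. -/
lemma quantile_gc (F : StieltjesFunction ℝ) (h0 : Tendsto F atBot (𝓝 0))
    (h1 : Tendsto F atTop (𝓝 1)) {u : ℝ} (hu : u ∈ Set.Ioo (0:ℝ) 1) (x : ℝ) :
    sInf {y | u ≤ F y} ≤ x ↔ u ≤ F x := by
  set S := {y : ℝ | u ≤ F y} with hS
  have hne : S.Nonempty := by
    obtain ⟨y, hy⟩ := (h1.eventually (eventually_gt_nhds hu.2)).exists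
    exact ⟨y, hy.le⟩
  have hbdd : BddBelow S := by
    obtain ⟨b, hb⟩ := (h0.eventually (eventually_lt_nhds hu.1)).exists_forall_of_atBot
    refine ⟨b, fun y hy => ?_⟩
    by_contra h
    exact absurd hy (not_le.2 (hb y (le_of_not_ge h)))
  have hmem : u ≤ F (sInf S) := by
    have hev : ∀ᶠ y in 𝓝[>] (sInf S), u ≤ F y := by
      filter_upwards [self_mem_nhdsWithin] with y (hy : sInf S < y)
      obtain ⟨z, hz, hzy⟩ := (csInf_lt_iff hbdd hne).1 hy
      exact le_trans hz (F.mono hzy.le)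
    have hcont : Tendsto F (𝓝[>] (sInf S)) (𝓝 (F (sInf S))) :=
      (F.right_continuous (sInf S)).tendsto.mono_left (nhdsWithin_mono _ Ioi_subset_Ici_self)
    exact ge_of_tendsto hcont hev
  constructor
  · exact fun h => le_trans hmem (F.mono h)
  · exact fun h => csInf_le hbdd h

/-- `ES_α(X) = (1-α)⁻¹ ∫_α^1 VaR_u(X) du`. -/
theorem es_eq_integral_var {Ω : Type*} [MeasurableSpace Ω] (μ : Measure Ω)
    [IsProbabilityMeasure μ] (α : ℝ) (hα : α ∈ Set.Ioo (0 : ℝ) 1)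
    (X : Ω → ℝ) (hX : Measurable X)
    (hint : Integrable (fun ω => max 0 (- X ω)) μ) :
    ES μ X α = (1 - α)⁻¹ * ∫ u in Set.Ioo α 1, VaR μ X u := by
  obtain ⟨hα0, hα1⟩ := hα
  set Y : Ω → ℝ := fun ω => - X ω with hYdef
  have hY : Measurable Y := hX.neg
  set ν : Measure ℝ := μ.map Y with hν
  have hνprob : IsProbabilityMeasure ν := Measure.isProbabilityMeasure_map hY.aemeasurable
  set F := ProbabilityTheory.cdf ν with hF
  have h0 : Filter.Tendsto F Filter.atBot (𝓝 0) := ProbabilityTheory.tendsto_cdf_atBot ν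
  have h1 : Filter.Tendsto F Filter.atTop (𝓝 1) := ProbabilityTheory.tendsto_cdf_atTop ν
  have hμF : ∀ x, μ {ω | Y ω ≤ x} = ENNReal.ofReal (F x) := by
    intro x
    rw [hF, ProbabilityTheory.ofReal_cdf, hν, Measure.map_apply hY measurableSet_Iic]
    rfl
  have hquant : ∀ u : ℝ, quantile μ Y u = sInf {x | u ≤ F x} := by
    intro u
    unfold quantile
    congr 1
    ext x
    simp only [Set.mem_setOf_eq]
    rw [hμF x, ENNReal.ofReal_le_ofReal_iff (ProbabilityTheory.cdf_nonneg ν x)]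
  set Q : ℝ → ℝ := fun u => sInf {x | u ≤ F x} with hQdef
  have gc : ∀ {u : ℝ}, u ∈ Set.Ioo (0:ℝ) 1 → ∀ x : ℝ, (Q u ≤ x ↔ u ≤ F x) :=
    fun hu x => quantile_gc F h0 h1 hu x
  set q : ℝ := Q α with hqdef
  have hαIoo : α ∈ Set.Ioo (0:ℝ) 1 := ⟨hα0, hα1⟩
  have hsub : ∀ u ∈ Set.Ioo α 1, u ∈ Set.Ioo (0:ℝ) 1 := fun u hu => ⟨hα0.trans hu.1, hu.2⟩
  have hFq : α ≤ F q := (gc hαIoo q).1 le_rfl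
  have hqle : ∀ u ∈ Set.Ioo α 1, q ≤ Q u := fun u hu =>
    (gc hαIoo (Q u)).2 (le_trans hu.1.le ((gc (hsub u hu) (Q u)).1 le_rfl))
  -- the positive part function on Ω
  set Mq : Ω → ℝ := fun ω => max 0 (Y ω - q) with hMqdef
  have hMqm : Measurable Mq := measurable_const.max (hY.sub measurable_const)
  have hMqnn : 0 ≤ᵐ[μ] Mq := Filter.Eventually.of_forall fun ω => le_max_left 0 _
  have hMqint : Integrable Mq μ := by
    refine (hint.add (integrable_const |q|)).mono' hMqm.aestronglyMeasurable ?_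
    filter_upwards with ω
    rw [Real.norm_eq_abs, abs_of_nonneg (le_max_left _ _)]
    have h1' : Y ω - q ≤ max 0 (- X ω) + |q| := by
      have := le_max_right (0:ℝ) (- X ω)
      have := neg_abs_le q
      simp only [hYdef]
      linarith
    have h2' : (0:ℝ) ≤ max 0 (- X ω) + |q| := by positivity
    exact max_le h2' h1'
  have hQmono : MonotoneOn Q (Set.Ioo α 1) := fun u hu v hv huv =>
    (gc (hsub u hu) (Q v)).2 (le_trans huv ((gc (hsub v hv) (Q v)).1 le_rfl))
  have hQae : AEMeasurable Q (volume.restrict (Set.Ioo α 1)) :=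
    aemeasurable_restrict_of_monotoneOn measurableSet_Ioo hQmono
  have hnn : 0 ≤ᵐ[volume.restrict (Set.Ioo α 1)] fun u => Q u - q := by
    filter_upwards [ae_restrict_mem measurableSet_Ioo] with u hu
    exact sub_nonneg.2 (hqle u hu)
  -- layer cake on both sides
  have hAB : (∫⁻ u in Set.Ioo α 1, ENNReal.ofReal (Q u - q))
      = ∫⁻ ω, ENNReal.ofReal (Mq ω) ∂μ := by
    rw [lintegral_eq_lintegral_meas_lt _ hnn (hQae.sub aemeasurable_const),
        lintegral_eq_lintegral_meas_lt μ hMqnn hMqm.aemeasurable]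
    refine setLIntegral_congr_fun measurableSet_Ioi (fun t ht => ?_)
    have ht0 : (0:ℝ) < t := ht
    have hset1 : {u : ℝ | t < Q u - q} ∩ Set.Ioo α 1 = Set.Ioo (F (q + t)) 1 := by
      ext u
      simp only [Set.mem_inter_iff, Set.mem_setOf_eq, Set.mem_Ioo]
      constructor
      · rintro ⟨h1'', h2'', h3''⟩
        refine ⟨?_, h3''⟩
        by_contra hcon
        have : u ≤ F (q + t) := le_of_not_gt hcon
        have := (gc (hsub u ⟨h2'', h3''⟩) (q + t)).2 this
        linarith
      · rintro ⟨h1'', h2''⟩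
        have hαu : α < u := lt_of_le_of_lt (le_trans hFq (F.mono (by linarith))) h1''
        refine ⟨?_, hαu, h2''⟩
        by_contra hcon
        have : Q u ≤ q + t := by linarith [le_of_not_gt hcon]
        have := (gc (hsub u ⟨hαu, h2''⟩) (q + t)).1 this
        linarith
    have hset2 : {ω | t < Mq ω} = {ω | Y ω ≤ q + t}ᶜ := by
      ext ω
      simp only [Set.mem_setOf_eq, Set.mem_compl_iff, hMqdef, lt_max_iff, not_le]
      constructor
      · rintro (h | h) <;> linarith
      · intro h; right; linarith
    rw [Measure.restrict_apply' measurableSet_Ioo, hset1, Real.volume_Ioo, hset2,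
        measure_compl (measurableSet_le hY measurable_const) (measure_ne_top μ _), measure_univ, hμF,
        ← ENNReal.ofReal_one, ← ENNReal.ofReal_sub _ (ProbabilityTheory.cdf_nonneg ν _)]
  have hBfin : (∫⁻ ω, ENNReal.ofReal (Mq ω) ∂μ) < ⊤ := hMqint.lintegral_lt_top
  have hQsubint : IntegrableOn (fun u => Q u - q) (Set.Ioo α 1) volume := by
    refine ⟨(hQae.sub aemeasurable_const).aestronglyMeasurable, ?_⟩
    rw [hasFiniteIntegral_iff_ofReal hnn]
    exact hAB ▸ hBfin
  have hI1 : (∫ u in Set.Ioo α 1, (Q u - q)) = ∫ ω, Mq ω ∂μ := by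
    rw [integral_eq_lintegral_of_nonneg_ae hnn
          (hQae.sub aemeasurable_const).aestronglyMeasurable,
        integral_eq_lintegral_of_nonneg_ae hMqnn hMqm.aestronglyMeasurable, hAB]
  have hvol : (volume (Set.Ioo α 1)).toReal = 1 - α := by
    rw [Real.volume_Ioo, ENNReal.toReal_ofReal (by linarith)]
  have hconstint : IntegrableOn (fun _ : ℝ => q) (Set.Ioo α 1) volume := by
    refine integrableOn_const ?_
    rw [Real.volume_Ioo]; exact ENNReal.ofReal_ne_top
  have hI2 : (∫ u in Set.Ioo α 1, Q u) = (∫ ω, Mq ω ∂μ) + q * (1 - α) := by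
    have : (∫ u in Set.Ioo α 1, Q u)
        = ∫ u in Set.Ioo α 1, ((Q u - q) + q) := by
      refine setIntegral_congr_fun measurableSet_Ioo fun u _ => by ring
    rw [this, integral_add hQsubint hconstint, hI1, setIntegral_const, measureReal_def, hvol, smul_eq_mul,
        mul_comm]
  -- the Ω side
  set S : Set Ω := {ω | q ≤ Y ω} with hSdef
  have hSm : MeasurableSet S := measurableSet_le measurable_const hY
  have hind : ∀ ω, S.indicator (fun ω => Y ω - q) ω = Mq ω := by
    intro ω
    by_cases h : ω ∈ S
    · rw [Set.indicator_of_mem h, hMqdef]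
      exact (max_eq_right (sub_nonneg.2 h)).symm
    · rw [Set.indicator_of_notMem h, hMqdef]
      have : Y ω < q := not_le.1 h
      exact (max_eq_left (by linarith)).symm
  have hIOn : IntegrableOn (fun ω => Y ω - q) S μ := by
    exact (integrable_indicator_iff hSm).1 ((funext hind).symm ▸ hMqint)
  have hIS : (∫ ω in S, (Y ω - q) ∂μ) = ∫ ω, Mq ω ∂μ := by
    rw [← integral_indicator hSm]
    exact integral_congr_ae (ae_of_all _ hind)
  have hconstS : IntegrableOn (fun _ : Ω => q) S μ :=
    integrableOn_const (measure_ne_top μ S)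
  have hISY : (∫ ω in S, Y ω ∂μ) = (∫ ω, Mq ω ∂μ) + q * (μ S).toReal := by
    have : (∫ ω in S, Y ω ∂μ) = ∫ ω in S, ((Y ω - q) + q) ∂μ := by
      refine setIntegral_congr_fun hSm fun ω _ => by ring
    rw [this, integral_add hIOn hconstS, hIS, setIntegral_const, measureReal_def, smul_eq_mul, mul_comm]
  have hXY : (∫ ω in S, X ω ∂μ) = - ∫ ω in S, Y ω ∂μ := by
    rw [← integral_neg]
    refine setIntegral_congr_fun hSm fun ω _ => ?_
    simp [hYdef]
  have hcompl : S = {ω | Y ω < q}ᶜ := by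
    ext ω; simp [hSdef, not_lt]
  have hμS : (μ S).toReal = 1 - (μ {ω | Y ω < q}).toReal := by
    rw [hcompl, measure_compl (measurableSet_lt hY measurable_const) (measure_ne_top μ _),
        measure_univ, ENNReal.toReal_sub_of_le prob_le_one ENNReal.one_ne_top, ENNReal.toReal_one]
  -- assemble
  have hVaR : (∫ u in Set.Ioo α 1, VaR μ X u) = ∫ u in Set.Ioo α 1, Q u := by
    refine setIntegral_congr_fun measurableSet_Ioo fun u _ => ?_
    exact hquant u
  have hqq : quantile μ (fun ω' => - X ω') α = q := hquant α
  rw [ES, hqq, hVaR, hI2]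
  have hSset : {ω | q ≤ - X ω} = S := rfl
  rw [hSset, hXY, hISY, hμS]
  show -(1 - α)⁻¹ * (-((∫ ω, Mq ω ∂μ) + q * (1 - (μ {ω | Y ω < q}).toReal))
      + q * (α - (μ {ω | Y ω < q}).toReal))
    = (1 - α)⁻¹ * ((∫ ω, Mq ω ∂μ) + q * (1 - α))
  ring
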